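/- Let λ, s₁, s₀, r₁, r₀, a₃, a₂, a₁, a₀ ∈ ℝ with λ ≠ 1, let t₀ > 0, set x₀ = t₀^(1/(1−λ)), and let y : ℝ → ℝ. Suppose (s₁x₀ + s₀·x₀^λ)·y(x₀) + r₁x₀ + r₀·x₀^λ ≠ 0 and y has derivative −(a₃y(x₀)³ + a₂y(x₀)² + a₁y(x₀) + a₀)/((s₁x₀ + s₀x₀^λ)y(x₀) + r₁x₀ + r₀x₀^λ) at x₀ (equation GTIB). Then the function v(t) = y(t^(1/(1−λ))) has derivative −(ã₃v(t₀)³ + ã₂v(t₀)² + ã₁v(t₀) + ã₀)/((s₁t₀ + s₀)v(t₀) + r₁t₀ + r₀) at t₀, where ãᵢ = aᵢ/(1−λ) for i = 0,1,2,3. Hence the equation GTIB is reduced by the change of variables x = t^(1/(1−λ)) to the AIL class representative with the constants redefined by aᵢ → (1−λ)aᵢ. -/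

import Mathlib

/-- The equation GTIB, `y' = −(a₃y³ + a₂y² + a₁y + a₀)/((s₁x + s₀x^λ)y + r₁x + r₀x^λ)`,
is reduced by the change of variables `x = t^(1/(1−λ))` to the AIL class representative
with the constants redefined by `aᵢ → (1−λ)aᵢ`. -/
theorem GTIB_reduces_to_AIL
    (lam s₁ s₀ r₁ r₀ a₃ a₂ a₁ a₀ : ℝ) (hlam : lam ≠ 1)
    (t₀ : ℝ) (ht₀ : 0 < t₀) (y : ℝ → ℝ) (x₀ : ℝ)
    (hx₀ : x₀ = t₀ ^ (1 / (1 - lam)))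
    (hden : (s₁ * x₀ + s₀ * x₀ ^ lam) * y x₀ + r₁ * x₀ + r₀ * x₀ ^ lam ≠ 0)
    (hy : HasDerivAt y
      (-((a₃ * (y x₀) ^ 3 + a₂ * (y x₀) ^ 2 + a₁ * (y x₀) + a₀) /
        ((s₁ * x₀ + s₀ * x₀ ^ lam) * y x₀ + r₁ * x₀ + r₀ * x₀ ^ lam))) x₀) :
    HasDerivAt (fun t : ℝ => y (t ^ (1 / (1 - lam))))
      (-(((a₃ / (1 - lam)) * (y x₀) ^ 3 + (a₂ / (1 - lam)) * (y x₀) ^ 2 +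
          (a₁ / (1 - lam)) * (y x₀) + a₀ / (1 - lam)) /
        ((s₁ * t₀ + s₀) * y x₀ + r₁ * t₀ + r₀))) t₀ := by
  set c : ℝ := 1 / (1 - lam) with hc
  have h1 : (1 : ℝ) - lam ≠ 0 := sub_ne_zero.mpr (Ne.symm hlam)
  have hg : HasDerivAt (fun t : ℝ => t ^ c) (c * t₀ ^ (c - 1)) t₀ :=
    Real.hasDerivAt_rpow_const (Or.inl ht₀.ne')
  set P : ℝ := t₀ ^ (c * lam) with hP
  have hPpos : 0 < P := Real.rpow_pos_of_pos ht₀ _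
  have hc2 : c * (1 - lam) = 1 := by rw [hc]; field_simp
  have hclam : c = c * lam + 1 := by linear_combination hc2
  have hx₀P : x₀ = P * t₀ := by
    rw [hx₀, hP]
    nth_rewrite 1 [hclam]
    rw [Real.rpow_add ht₀, Real.rpow_one]
  have hxlam : x₀ ^ lam = P := by
    rw [hx₀, hP, ← Real.rpow_mul ht₀.le]
  have hc1 : t₀ ^ (c - 1) = P := by
    rw [hP]; congr 1; linarith [hclam]
  have hE : (s₁ * x₀ + s₀ * x₀ ^ lam) * y x₀ + r₁ * x₀ + r₀ * x₀ ^ lam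
      = P * ((s₁ * t₀ + s₀) * y x₀ + r₁ * t₀ + r₀) := by
    rw [hxlam, hx₀P]; ring
  have hEne : (s₁ * t₀ + s₀) * y x₀ + r₁ * t₀ + r₀ ≠ 0 := by
    intro h
    apply hden
    rw [hE, h, mul_zero]
  have hy' : HasDerivAt y
      (-((a₃ * (y x₀) ^ 3 + a₂ * (y x₀) ^ 2 + a₁ * (y x₀) + a₀) /
        ((s₁ * x₀ + s₀ * x₀ ^ lam) * y x₀ + r₁ * x₀ + r₀ * x₀ ^ lam))) (t₀ ^ c) := by
    rw [← hx₀]; exact hy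
  have hcomp := hy'.comp t₀ hg
  have hdiv : ∀ a : ℝ, a / (1 - lam) = a * c := fun a => by rw [hc]; ring
  have hPne := hPpos.ne'
  clear_value c
  convert hcomp using 1
  case e'_4 => rfl
  case e'_5 => rfl
  case e'_8 => rfl
  rw [hE, hc1, hdiv, hdiv, hdiv, hdiv]
  field_simp
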